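/- Let u, v > 0 be real numbers and suppose k > 2 satisfies: |π − p/q| < 1/q^k holds for only finitely many coprime positive integers (p, q), and u − (k−1)·v > 1. Then the series ∑_{n=1}^∞ 1/(n^u · |sin n|^v) converges. -/

import Mathlib

open Real in
theorem series_converges (u v k : ℝ) (hu : 0 < u) (hv : 0 < v) (hk : 2 < k)
    (hfin : {pq : ℕ × ℕ | 0 < pq.1 ∧ 0 < pq.2 ∧ Nat.Coprime pq.1 pq.2 ∧
        |π - (pq.1 : ℝ) / (pq.2 : ℝ)| < 1 / (pq.2 : ℝ) ^ k}.Finite)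
    (huv : 1 < u - (k - 1) * v) :
    Summable (fun n : ℕ => 1 / ((n : ℝ) ^ u * |Real.sin n| ^ v)) := by
  -- Step 1: a uniform lower bound ε on |π - p/q| over the (finite) exceptional set
  obtain ⟨ε, hε0, hε1, hε⟩ : ∃ ε : ℝ, 0 < ε ∧ ε ≤ 1 ∧ ∀ p q : ℕ, 0 < p → 0 < q →
      Nat.Coprime p q → |π - (p : ℝ) / q| < 1 / (q : ℝ) ^ k → ε ≤ |π - (p : ℝ) / q| := by
    set F : Finset ℝ := insert 1 (hfin.toFinset.image fun pq => |π - (pq.1 : ℝ) / pq.2|)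
    have hFne : F.Nonempty := ⟨1, Finset.mem_insert_self _ _⟩
    refine ⟨F.min' hFne, ?_, ?_, ?_⟩
    · apply lt_of_lt_of_le _ (le_refl (F.min' hFne))
      rcases Finset.mem_insert.mp (F.min'_mem hFne) with h | h
      · rw [h]; norm_num
      · obtain ⟨pq, hpq, hval⟩ := Finset.mem_image.mp h
        rw [← hval]
        have hmem := hfin.mem_toFinset.mp hpq
        have hq : (0 : ℝ) < pq.2 := by exact_mod_cast hmem.2.1
        have : π ≠ (pq.1 : ℝ) / pq.2 := by
          intro h
          have : ((pq.1 / pq.2 : ℚ) : ℝ) = (pq.1 : ℝ) / pq.2 := by push_cast; ring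
          exact irrational_pi.ne_rat (pq.1 / pq.2) (h.trans this.symm)
        exact abs_pos.mpr (sub_ne_zero.mpr this)
    · exact Finset.min'_le _ _ (Finset.mem_insert_self _ _)
    · intro p q hp hq hcop hlt
      apply Finset.min'_le
      apply Finset.mem_insert_of_mem
      exact Finset.mem_image.mpr ⟨(p, q), hfin.mem_toFinset.mpr ⟨hp, hq, hcop, hlt⟩, rfl⟩
  -- Step 2: for all positive p, q (not nec. coprime), min ε (1/q^k) ≤ |π - p/q|
  have hk0 : (0 : ℝ) ≤ k := by linarith
  have hall : ∀ p q : ℕ, 0 < p → 0 < q → min ε (1 / (q : ℝ) ^ k) ≤ |π - (p : ℝ) / q| := by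
    intro p q hp hq
    set d := Nat.gcd p q with hd
    have hd0 : 0 < d := Nat.gcd_pos_of_pos_left _ hp
    set p' := p / d
    set q' := q / d
    have hp' : 0 < p' := Nat.div_pos (Nat.gcd_le_left _ hp) hd0
    have hq' : 0 < q' := Nat.div_pos (Nat.gcd_le_right _ hq) hd0
    have hcop : Nat.Coprime p' q' := Nat.coprime_div_gcd_div_gcd hd0
    have hpe : p = d * p' := (Nat.mul_div_cancel' (Nat.gcd_dvd_left p q)).symm
    have hqe : q = d * q' := (Nat.mul_div_cancel' (Nat.gcd_dvd_right p q)).symm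
    have hfrac : (p : ℝ) / q = (p' : ℝ) / q' := by
      rw [hpe, hqe]
      push_cast
      rw [mul_div_mul_left]
      exact_mod_cast hd0.ne'
    rw [hfrac]
    have hq'le : (q' : ℝ) ≤ q := by exact_mod_cast Nat.div_le_self q d
    have hq'1 : (1 : ℝ) ≤ (q' : ℝ) := by exact_mod_cast hq'
    have hqpow : 1 / (q : ℝ) ^ k ≤ 1 / (q' : ℝ) ^ k := by
      apply one_div_le_one_div_of_le
      · exact Real.rpow_pos_of_pos (by linarith) k
      · exact Real.rpow_le_rpow (by linarith) hq'le hk0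
    by_cases hmem : |π - (p' : ℝ) / q'| < 1 / (q' : ℝ) ^ k
    · exact le_trans (min_le_left _ _) (hε p' q' hp' hq' hcop hmem)
    · exact le_trans (min_le_right _ _) (hqpow.trans (not_lt.mp hmem))
  -- Step 3: lower bound on |sin n|
  set c : ℝ := 2 / π * ε with hc
  have hπ := Real.pi_pos
  have hc0 : 0 < c := by positivity
  have hsin : ∀ n : ℕ, 1 ≤ n → c * (n : ℝ) ^ (1 - k) ≤ |Real.sin n| := by
    intro n hn
    have hn1 : (1 : ℝ) ≤ (n : ℝ) := by exact_mod_cast hn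
    have hn0 : (0 : ℝ) < n := by linarith
    have hnk : (n : ℝ) ^ (1 - k) ≤ 1 :=
      Real.rpow_le_one_of_one_le_of_nonpos hn1 (by linarith)
    have hnkpos : (0 : ℝ) < (n : ℝ) ^ (1 - k) := Real.rpow_pos_of_pos hn0 _
    set M : ℤ := round ((n : ℝ) / π) with hM
    have hround : |(n : ℝ) / π - M| ≤ 1 / 2 := abs_sub_round _
    set x : ℝ := n - M * π with hx
    have hxb : |x| ≤ π / 2 := by
      have : x = ((n : ℝ) / π - M) * π := by rw [hx]; field_simp
      rw [this, abs_mul, abs_of_pos hπ]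
      calc |(n : ℝ) / π - M| * π ≤ 1 / 2 * π := by nlinarith [abs_nonneg ((n:ℝ)/π - M)]
        _ = π / 2 := by ring
    have hsineq : |Real.sin n| = |Real.sin x| := by
      have : (n : ℝ) = x + M * π := by ring
      rw [this, Real.sin_add_int_mul_pi, abs_mul]
      rcases Int.even_or_odd M with h | h
      · rw [h.neg_one_zpow, abs_one, one_mul]
      · rw [h.neg_one_zpow, abs_neg, abs_one, one_mul]
    have hjordan : 2 / π * |x| ≤ |Real.sin x| := by
      have h1 : 2 / π * |x| ≤ Real.sin |x| := Real.mul_le_sin (abs_nonneg x) hxb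
      have h2 : Real.sin |x| ≤ |Real.sin x| := by
        rcases abs_choice x with h | h
        · rw [h]; exact le_abs_self _
        · rw [h, Real.sin_neg]; exact neg_le_abs _
      linarith
    rw [hsineq]
    -- now bound |x| from below
    have hM0 : 0 ≤ M := by
      by_contra h
      push_neg at h
      have hM1 : (M : ℝ) ≤ -1 := by exact_mod_cast (by omega : M ≤ -1)
      have : (n : ℝ) / π - M ≥ 1 + 0 := by
        have : (0:ℝ) < (n : ℝ) / π := by positivity
        linarith
      have := le_abs_self ((n : ℝ) / π - M)
      linarith
    rcases eq_or_lt_of_le hM0 with h0 | hMpos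
    · -- M = 0 : |x| = n ≥ 1
      have hxn : x = n := by rw [hx, ← h0]; push_cast; ring
      have : ε * (n : ℝ) ^ (1 - k) ≤ |x| := by
        rw [hxn, abs_of_pos hn0]
        nlinarith
      calc c * (n : ℝ) ^ (1 - k) = 2 / π * (ε * (n : ℝ) ^ (1 - k)) := by rw [hc]; ring
        _ ≤ 2 / π * |x| := by
            apply mul_le_mul_of_nonneg_left this (by positivity)
        _ ≤ |Real.sin x| := hjordan
    · -- M ≥ 1
      set m : ℕ := M.toNat with hm
      have hmM : (m : ℤ) = M := Int.toNat_of_nonneg hM0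
      have hmpos : 0 < m := by omega
      have hmR : (m : ℝ) = (M : ℝ) := by exact_mod_cast congrArg (Int.cast : ℤ → ℝ) hmM
      have hm1 : (1 : ℝ) ≤ (m : ℝ) := by exact_mod_cast hmpos
      have hmpos' : (0 : ℝ) < (m : ℝ) := by linarith
      have hneg : (m : ℝ) * (π - (n : ℝ) / m) = -x := by
        rw [hx, ← hmR]; field_simp; ring
      have hxm : |x| = (m : ℝ) * |π - (n : ℝ) / m| := by
        calc |x| = |-x| := (abs_neg x).symm
          _ = |(m : ℝ) * (π - (n : ℝ) / m)| := by rw [hneg]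
          _ = (m : ℝ) * |π - (n : ℝ) / m| := by rw [abs_mul, abs_of_pos hmpos']
      have hmn : (m : ℝ) ≤ n := by
        have h1 : (M : ℝ) ≤ (n : ℝ) / π + 1 / 2 := by
          have := abs_le.mp hround
          linarith [this.2]
        have h2 : (n : ℝ) / π ≤ n / 3 := by
          apply div_le_div_of_nonneg_left (by linarith) (by norm_num)
          linarith [Real.pi_gt_three]
        rw [hmR]
        nlinarith
      have hmk : (n : ℝ) ^ (1 - k) ≤ (m : ℝ) ^ (1 - k) :=
        Real.rpow_le_rpow_of_nonpos (by linarith) hmn (by linarith)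
      have hm1k : (m : ℝ) * (1 / (m : ℝ) ^ k) = (m : ℝ) ^ (1 - k) := by
        rw [Real.rpow_sub (by linarith), Real.rpow_one]
        field_simp
      have hbound := hall n m (by omega) hmpos
      have hεle : ε * (n : ℝ) ^ (1 - k) ≤ (m : ℝ) * min ε (1 / (m : ℝ) ^ k) := by
        rcases min_cases ε (1 / (m : ℝ) ^ k) with ⟨heq, _⟩ | ⟨heq, _⟩
        · rw [heq]
          calc ε * (n : ℝ) ^ (1 - k) ≤ ε * 1 := mul_le_mul_of_nonneg_left hnk hε0.le
            _ = 1 * ε := by ring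
            _ ≤ (m : ℝ) * ε := mul_le_mul_of_nonneg_right hm1 hε0.le
        · rw [heq, hm1k]
          calc ε * (n : ℝ) ^ (1 - k) ≤ 1 * (n : ℝ) ^ (1 - k) :=
              mul_le_mul_of_nonneg_right hε1 hnkpos.le
            _ = (n : ℝ) ^ (1 - k) := one_mul _
            _ ≤ (m : ℝ) ^ (1 - k) := hmk
      have hxlow : ε * (n : ℝ) ^ (1 - k) ≤ |x| := by
        rw [hxm]
        refine hεle.trans (mul_le_mul_of_nonneg_left hbound (by positivity))
      calc c * (n : ℝ) ^ (1 - k) = 2 / π * (ε * (n : ℝ) ^ (1 - k)) := by rw [hc]; ring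
        _ ≤ 2 / π * |x| := mul_le_mul_of_nonneg_left hxlow (by positivity)
        _ ≤ |Real.sin x| := hjordan
  -- Step 4: comparison with a convergent p-series
  set w : ℝ := u - (k - 1) * v with hw
  have hsummable : Summable (fun n : ℕ => 1 / c ^ v * (1 / (n : ℝ) ^ w)) :=
    (Real.summable_one_div_nat_rpow.mpr huv).mul_left _
  apply Summable.of_nonneg_of_le (fun n => by positivity) _ hsummable
  intro n
  rcases Nat.eq_zero_or_pos n with h0 | hn
  · subst h0
    simp only [Nat.cast_zero, Real.zero_rpow hu.ne', zero_mul, div_zero]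
    positivity
  · have hn0 : (0 : ℝ) < n := by exact_mod_cast hn
    have hs := hsin n hn
    have hspos : (0 : ℝ) < c * (n : ℝ) ^ (1 - k) := by positivity
    have hkey : c ^ v * (n : ℝ) ^ w ≤ (n : ℝ) ^ u * |Real.sin n| ^ v := by
      have h1 : (c * (n : ℝ) ^ (1 - k)) ^ v ≤ |Real.sin n| ^ v :=
        Real.rpow_le_rpow hspos.le hs hv.le
      have h2 : (c * (n : ℝ) ^ (1 - k)) ^ v = c ^ v * (n : ℝ) ^ ((1 - k) * v) := by
        rw [Real.mul_rpow hc0.le (Real.rpow_pos_of_pos hn0 _).le, ← Real.rpow_mul hn0.le]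
      have h3 : (n : ℝ) ^ u * ((n : ℝ) ^ ((1 - k) * v)) = (n : ℝ) ^ w := by
        rw [← Real.rpow_add hn0, hw]; ring_nf
      calc c ^ v * (n : ℝ) ^ w = (n : ℝ) ^ u * (c ^ v * (n : ℝ) ^ ((1 - k) * v)) := by
            rw [← h3]; ring
        _ ≤ (n : ℝ) ^ u * |Real.sin n| ^ v := by
            rw [← h2]
            exact mul_le_mul_of_nonneg_left h1 (Real.rpow_pos_of_pos hn0 _).le
    have hwpos : (0 : ℝ) < c ^ v * (n : ℝ) ^ w := by positivity
    calc 1 / ((n : ℝ) ^ u * |Real.sin n| ^ v) ≤ 1 / (c ^ v * (n : ℝ) ^ w) :=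
          one_div_le_one_div_of_le hwpos hkey
      _ = 1 / c ^ v * (1 / (n : ℝ) ^ w) := by rw [one_div_mul_eq_div, div_div]; ring_nf
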